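/- Let N be a finite set and let D(N) denote the set of unordered pairs of distinct elements of N. Suppose G is a simple (undirected) graph with vertex set D(N) whose adjacency relation is invariant under the natural action of every permutation π of N (i.e., for all dyads {i,j},{k,l} in D(N), {i,j} and {k,l} are adjacent in G if and only if {π(i),π(j)} and {π(k),π(l)} are adjacent in G). Then G is one of exactly four graphs: (a) the empty graph on D(N); (b) the incidence graph L(N), in which two distinct dyads are adjacent if and only if they share a common element of N; (c) the complement of the incidence graph, in which two distinct dyads are adjacent if and only if they are disjoint; or (d) the complete graph on D(N). -/

import Mathlib

/-- The type of dyads over a node set `V`: unordered pairs of distinct nodes. -/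
abbrev Dyad (V : Type*) : Type _ := {d : Sym2 V // ¬ d.IsDiag}

/-- The action of a permutation of the node set on dyads. -/
def dyadPerm {V : Type*} (π : Equiv.Perm V) (d : Dyad V) : Dyad V :=
  ⟨d.1.map π, by
    rw [Sym2.isDiag_map (Equiv.injective π)]
    exact d.2⟩

/-- The incidence graph `L(N)`: vertices are the dyads of `N`, and two distinct
dyads are adjacent iff they share a common node. -/
def incidenceGraph (V : Type*) : SimpleGraph (Dyad V) where
  Adj d e := d ≠ e ∧ ∃ i, i ∈ d.1 ∧ i ∈ e.1
  symm := by
    constructor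
    rintro d e ⟨hne, i, h1, h2⟩
    exact ⟨hne.symm, i, h2, h1⟩
  loopless := by
    constructor
    rintro d ⟨hne, _⟩
    exact hne rfl

lemma exists_perm_comp_eq {V : Type*} [Fintype V] {n : ℕ} (f g : Fin n → V)
    (hf : Function.Injective f) (hg : Function.Injective g) :
    ∃ π : Equiv.Perm V, ∀ k, π (f k) = g k := by
  classical
  let e : {x // x ∈ Set.range f} ≃ {x // x ∈ Set.range g} :=
    (Equiv.ofInjective f hf).symm.trans (Equiv.ofInjective g hg)
  refine ⟨e.extendSubtype, fun k => ?_⟩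
  rw [e.extendSubtype_apply_of_mem _ ⟨k, rfl⟩]
  haveI : Nonempty (Fin n) := ⟨k⟩
  simp [e, Equiv.ofInjective, Function.leftInverse_invFun hf k]

/-- transitivity on pairs of dyads sharing a node -/
lemma share_trans {V : Type*} [Fintype V] [DecidableEq V] (d e d' e' : Dyad V)
    (hde : d ≠ e) (hde' : d' ≠ e')
    (hs : ∃ i, i ∈ d.1 ∧ i ∈ e.1) (hs' : ∃ i, i ∈ d'.1 ∧ i ∈ e'.1) :
    ∃ π : Equiv.Perm V, dyadPerm π d = d' ∧ dyadPerm π e = e' := by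
  obtain ⟨i, hid, hie⟩ := hs
  obtain ⟨i', hid', hie'⟩ := hs'
  obtain ⟨b, hb⟩ := Sym2.mem_iff_exists.mp hid
  obtain ⟨c, hc⟩ := Sym2.mem_iff_exists.mp hie
  obtain ⟨b', hb'⟩ := Sym2.mem_iff_exists.mp hid'
  obtain ⟨c', hc'⟩ := Sym2.mem_iff_exists.mp hie'
  have hib : i ≠ b := by intro h; exact d.2 (by rw [hb, ← h]; exact Sym2.mk_isDiag_iff.mpr rfl)
  have hic : i ≠ c := by intro h; exact e.2 (by rw [hc, ← h]; exact Sym2.mk_isDiag_iff.mpr rfl)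
  have hbc : b ≠ c := by
    intro h; apply hde; apply Subtype.ext; rw [hb, hc, h]
  have hib' : i' ≠ b' := by
    intro h; exact d'.2 (by rw [hb', ← h]; exact Sym2.mk_isDiag_iff.mpr rfl)
  have hic' : i' ≠ c' := by
    intro h; exact e'.2 (by rw [hc', ← h]; exact Sym2.mk_isDiag_iff.mpr rfl)
  have hbc' : b' ≠ c' := by
    intro h; apply hde'; apply Subtype.ext; rw [hb', hc', h]
  have hf : Function.Injective ![i, b, c] := by
    intro x y hxy; fin_cases x <;> fin_cases y <;> simp_all
  have hg : Function.Injective ![i', b', c'] := by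
    intro x y hxy; fin_cases x <;> fin_cases y <;> simp_all
  obtain ⟨π, hπ⟩ := exists_perm_comp_eq _ _ hf hg
  have h0 := hπ 0; have h1 := hπ 1; have h2 := hπ 2
  simp only [Matrix.cons_val_zero, Matrix.cons_val_one, Matrix.head_cons,
    Matrix.cons_val_two, Matrix.tail_cons] at h0 h1 h2
  refine ⟨π, Subtype.ext ?_, Subtype.ext ?_⟩
  · show (d.1.map π) = d'.1
    rw [hb, hb', Sym2.map_pair_eq, h0, h1]
  · show (e.1.map π) = e'.1
    rw [hc, hc', Sym2.map_pair_eq, h0, h2]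

/-- transitivity on pairs of disjoint dyads -/
lemma disj_trans {V : Type*} [Fintype V] [DecidableEq V] (d e d' e' : Dyad V)
    (hs : ¬ ∃ i, i ∈ d.1 ∧ i ∈ e.1) (hs' : ¬ ∃ i, i ∈ d'.1 ∧ i ∈ e'.1) :
    ∃ π : Equiv.Perm V, dyadPerm π d = d' ∧ dyadPerm π e = e' := by
  push_neg at hs hs'
  obtain ⟨⟨a, b⟩, hab⟩ := d.1.exists_rep
  obtain ⟨⟨c, c2⟩, hcd⟩ := e.1.exists_rep
  obtain ⟨⟨a', b'⟩, hab'⟩ := d'.1.exists_rep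
  obtain ⟨⟨c', c2'⟩, hcd'⟩ := e'.1.exists_rep
  have habne : a ≠ b := by
    intro h; exact d.2 (by rw [← hab, ← h]; exact Sym2.mk_isDiag_iff.mpr rfl)
  have hcdne : c ≠ c2 := by
    intro h; exact e.2 (by rw [← hcd, ← h]; exact Sym2.mk_isDiag_iff.mpr rfl)
  have habne' : a' ≠ b' := by
    intro h; exact d'.2 (by rw [← hab', ← h]; exact Sym2.mk_isDiag_iff.mpr rfl)
  have hcdne' : c' ≠ c2' := by
    intro h; exact e'.2 (by rw [← hcd', ← h]; exact Sym2.mk_isDiag_iff.mpr rfl)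
  have hac : a ≠ c := fun h => hs a (by rw [← hab]; simp) (by rw [← hcd, h]; simp)
  have had : a ≠ c2 := fun h => hs a (by rw [← hab]; simp) (by rw [← hcd, h]; simp)
  have hbc : b ≠ c := fun h => hs b (by rw [← hab]; simp) (by rw [← hcd, h]; simp)
  have hbd : b ≠ c2 := fun h => hs b (by rw [← hab]; simp) (by rw [← hcd, h]; simp)
  have hac' : a' ≠ c' := fun h => hs' a' (by rw [← hab']; simp) (by rw [← hcd', h]; simp)
  have had' : a' ≠ c2' := fun h => hs' a' (by rw [← hab']; simp) (by rw [← hcd', h]; simp)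
  have hbc' : b' ≠ c' := fun h => hs' b' (by rw [← hab']; simp) (by rw [← hcd', h]; simp)
  have hbd' : b' ≠ c2' := fun h => hs' b' (by rw [← hab']; simp) (by rw [← hcd', h]; simp)
  have hf : Function.Injective ![a, b, c, c2] := by
    intro x y hxy; fin_cases x <;> fin_cases y <;> simp_all
  have hg : Function.Injective ![a', b', c', c2'] := by
    intro x y hxy; fin_cases x <;> fin_cases y <;> simp_all
  obtain ⟨π, hπ⟩ := exists_perm_comp_eq _ _ hf hg
  have h0 := hπ 0; have h1 := hπ 1; have h2 := hπ 2; have h3 := hπ 3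
  simp only [Matrix.cons_val_zero, Matrix.cons_val_one, Matrix.head_cons,
    Matrix.cons_val_two, Matrix.tail_cons, Matrix.cons_val_three] at h0 h1 h2 h3
  refine ⟨π, Subtype.ext ?_, Subtype.ext ?_⟩
  · show (d.1.map π) = d'.1
    rw [← hab, ← hab']
    show Sym2.map π s(a, b) = s(a', b')
    rw [Sym2.map_pair_eq, h0, h1]
  · show (e.1.map π) = e'.1
    rw [← hcd, ← hcd']
    show Sym2.map π s(c, c2) = s(c', c2')
    rw [Sym2.map_pair_eq, h2, h3]

/-- If a simple graph `G` on the dyads of a finite node set `N` is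
invariant under the natural action of every permutation of `N`, then `G` is the
empty graph, the incidence graph `L(N)`, its complement, or the complete graph. -/
theorem stmt0 {V : Type*} [Fintype V] [DecidableEq V] (G : SimpleGraph (Dyad V))
    (hinv : ∀ (π : Equiv.Perm V) (d e : Dyad V),
      G.Adj d e ↔ G.Adj (dyadPerm π d) (dyadPerm π e)) :
    G = ⊥ ∨ G = incidenceGraph V ∨ G = (incidenceGraph V)ᶜ ∨ G = ⊤ := by
  classical
  by_cases hP : ∃ d e, G.Adj d e ∧ ∃ i, i ∈ d.1 ∧ i ∈ e.1
  · by_cases hQ : ∃ d e, G.Adj d e ∧ ¬ ∃ i, i ∈ d.1 ∧ i ∈ e.1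
    · -- complete
      right; right; right
      ext d e
      simp only [SimpleGraph.top_adj]
      constructor
      · exact G.ne_of_adj
      · intro hne
        by_cases hs : ∃ i, i ∈ d.1 ∧ i ∈ e.1
        · obtain ⟨d0, e0, hadj, hs0⟩ := hP
          obtain ⟨π, h1, h2⟩ := share_trans d0 e0 d e (G.ne_of_adj hadj) hne hs0 hs
          rw [← h1, ← h2]; exact (hinv π d0 e0).mp hadj
        · obtain ⟨d0, e0, hadj, hs0⟩ := hQ
          obtain ⟨π, h1, h2⟩ := disj_trans d0 e0 d e hs0 hs
          rw [← h1, ← h2]; exact (hinv π d0 e0).mp hadj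
    · -- incidence graph
      right; left
      ext d e
      show G.Adj d e ↔ d ≠ e ∧ ∃ i, i ∈ d.1 ∧ i ∈ e.1
      constructor
      · intro hadj
        refine ⟨G.ne_of_adj hadj, ?_⟩
        by_contra hs
        exact hQ ⟨d, e, hadj, hs⟩
      · rintro ⟨hne, hs⟩
        obtain ⟨d0, e0, hadj, hs0⟩ := hP
        obtain ⟨π, h1, h2⟩ := share_trans d0 e0 d e (G.ne_of_adj hadj) hne hs0 hs
        rw [← h1, ← h2]; exact (hinv π d0 e0).mp hadj
  · by_cases hQ : ∃ d e, G.Adj d e ∧ ¬ ∃ i, i ∈ d.1 ∧ i ∈ e.1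
    · -- complement of incidence graph
      right; right; left
      ext d e
      rw [SimpleGraph.compl_adj]
      show G.Adj d e ↔ d ≠ e ∧ ¬ (d ≠ e ∧ ∃ i, i ∈ d.1 ∧ i ∈ e.1)
      constructor
      · intro hadj
        have hne := G.ne_of_adj hadj
        have hs : ¬ ∃ i, i ∈ d.1 ∧ i ∈ e.1 := fun hs => hP ⟨d, e, hadj, hs⟩
        exact ⟨hne, fun h => hs h.2⟩
      · rintro ⟨hne, hn⟩
        have hs : ¬ ∃ i, i ∈ d.1 ∧ i ∈ e.1 := fun hs => hn ⟨hne, hs⟩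
        obtain ⟨d0, e0, hadj, hs0⟩ := hQ
        obtain ⟨π, h1, h2⟩ := disj_trans d0 e0 d e hs0 hs
        rw [← h1, ← h2]; exact (hinv π d0 e0).mp hadj
    · -- empty
      left
      ext d e
      simp only [SimpleGraph.bot_adj, iff_false]
      intro hadj
      by_cases hs : ∃ i, i ∈ d.1 ∧ i ∈ e.1
      · exact hP ⟨d, e, hadj, hs⟩
      · exact hQ ⟨d, e, hadj, hs⟩
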